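/- Define a sequence (c_ℓ) by c₀ = 1 and c_ℓ = -∑_{i=1}^{ℓ} c_{ℓ-i}/(2i+1) for ℓ ≥ 1. Then for all real x with 0 < |x| < 1, the power series ∑_{ℓ=0}^{∞} c_ℓ x^{2ℓ} converges and equals 2x / ln((1+x)/(1-x)). -/

import Mathlib

theorem moore_linear_coeff_series (c : ℕ → ℝ) (hc0 : c 0 = 1)
    (hrec : ∀ ℓ : ℕ, 1 ≤ ℓ → c ℓ = -∑ i ∈ Finset.Icc 1 ℓ, c (ℓ - i) / (2 * (i : ℝ) + 1)) :
    ∀ x : ℝ, 0 < |x| → |x| < 1 →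
      HasSum (fun ℓ : ℕ => c ℓ * x ^ (2 * ℓ)) (2 * x / Real.log ((1 + x) / (1 - x))) := by
  -- the auxiliary coefficient sequence
  set a : ℕ → ℝ := fun i => 1 / (2 * (i : ℝ) + 1) with ha_def
  have ha0 : a 0 = 1 := by simp [ha_def]
  have hapos : ∀ i, 0 < a i := by
    intro i
    have : (0:ℝ) < 2 * (i:ℝ) + 1 := by positivity
    exact one_div_pos.mpr this
  have hale1 : ∀ i, a i ≤ 1 := by
    intro i
    rw [ha_def]
    rw [div_le_one (by positivity)]
    have : (0:ℝ) ≤ (i:ℝ) := Nat.cast_nonneg i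
    linarith
  -- the recursion in `range` form
  have hrec'' : ∀ n : ℕ, 1 ≤ n →
      c n = -∑ j ∈ Finset.range n, a (j + 1) * c (n - 1 - j) := by
    intro n hn
    rw [hrec n hn]
    congr 1
    have h1 : Finset.Icc 1 n = Finset.Ico 1 (n + 1) := by
      ext k; simp [Nat.lt_succ_iff]
    rw [h1, Finset.sum_Ico_eq_sum_range]
    simp only [Nat.add_sub_cancel]
    refine Finset.sum_congr rfl ?_
    intro j hj
    have : n - (1 + j) = n - 1 - j := by omega
    rw [this]
    rw [ha_def]
    push_cast
    ring
  -- the convolution identity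
  have hconv : ∀ n : ℕ, 1 ≤ n →
      ∑ j ∈ Finset.range (n + 1), a j * c (n - j) = 0 := by
    intro n hn
    rw [Finset.sum_range_succ']
    have h2 : ∑ j ∈ Finset.range n, a (j + 1) * c (n - (j + 1))
        = ∑ j ∈ Finset.range n, a (j + 1) * c (n - 1 - j) := by
      refine Finset.sum_congr rfl ?_
      intro j hj
      congr 2
      omega
    rw [h2, ha0, Nat.sub_zero, one_mul, hrec'' n hn]
    ring
  -- nonpositivity of the coefficients (Kaluza's argument)
  have hneg : ∀ n : ℕ, 1 ≤ n → c n ≤ 0 := by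
    intro n
    induction n using Nat.strong_induction_on with
    | _ n IH =>
      intro hn
      rcases Nat.lt_or_ge n 2 with h2 | h2
      · -- n = 1
        have hn1 : n = 1 := by omega
        subst hn1
        rw [hrec'' 1 le_rfl]
        simp only [Finset.range_one, Finset.sum_singleton, hc0]
        have := hapos 1
        simp only [mul_one]
        linarith
      · -- n ≥ 2, write n = m + 2
        obtain ⟨m, rfl⟩ : ∃ m, n = m + 2 := ⟨n - 2, by omega⟩
        set n := m + 2
        -- key identity
        have hzero : ∑ j ∈ Finset.range n, a j * c (n - 1 - j) = 0 := by
          have := hconv (m + 1) (by omega)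
          have heq : ∑ j ∈ Finset.range (m + 2), a j * c (m + 1 - j)
              = ∑ j ∈ Finset.range n, a j * c (n - 1 - j) := by
            refine Finset.sum_congr rfl ?_
            intro j hj
            congr 2
          rw [← heq]
          exact this
        have hkey : c n = -∑ j ∈ Finset.range n,
            (a (j + 1) - (a n / a (n - 1)) * a j) * c (n - 1 - j) := by
          rw [hrec'' n (by omega)]
          have : ∑ j ∈ Finset.range n, (a (j + 1) - (a n / a (n - 1)) * a j) * c (n - 1 - j)
              = ∑ j ∈ Finset.range n, a (j + 1) * c (n - 1 - j)
                - (a n / a (n - 1)) * ∑ j ∈ Finset.range n, a j * c (n - 1 - j) := by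
            rw [Finset.mul_sum, ← Finset.sum_sub_distrib]
            refine Finset.sum_congr rfl fun j _ => by ring
          rw [this, hzero]
          ring
        rw [hkey, neg_nonpos]
        refine Finset.sum_nonneg ?_
        intro j hj
        rw [Finset.mem_range] at hj
        -- coefficient is nonpositive
        have hcoef : a (j + 1) - (a n / a (n - 1)) * a j ≤ 0 := by
          have hn1 : (n : ℕ) - 1 = m + 1 := by omega
          have hj' : (j : ℝ) ≤ (m : ℝ) + 1 := by
            have : j ≤ m + 1 := by omega
            exact_mod_cast this
          have hdiv : a n / a (n - 1) = (2 * (m:ℝ) + 3) / (2 * (m:ℝ) + 5) := by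
            rw [hn1, ha_def]
            push_cast
            rw [div_eq_div_iff (by positivity) (by positivity)]
            field_simp
            simp only [n]
            push_cast
            ring
          rw [hdiv, ha_def]
          push_cast
          have e : (2*(m:ℝ)+3)/(2*(m:ℝ)+5) * (1/(2*(j:ℝ)+1))
              = (2*(m:ℝ)+3)/((2*(m:ℝ)+5)*(2*(j:ℝ)+1)) := by rw [div_mul_div_comm, mul_one]
          rw [sub_nonpos, e, div_le_div_iff₀ (by positivity) (by positivity)]
          nlinarith [hj']
        rcases Nat.lt_or_ge j (n - 1) with hjlt | hjge
        · have h1 : 1 ≤ n - 1 - j := by omega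
          have hc := IH (n - 1 - j) (by omega) h1
          rw [← neg_mul_neg]
          exact mul_nonneg (by linarith) (by linarith)
        · -- j = n - 1, coefficient is zero
          have hj1 : j = n - 1 := by omega
          subst hj1
          have hne : a (n - 1) ≠ 0 := ne_of_gt (hapos _)
          have : n - 1 + 1 = n := by omega
          rw [this, div_mul_cancel₀ _ hne, sub_self, zero_mul]
  -- bound |c n| ≤ 1
  have hbd : ∀ n : ℕ, |c n| ≤ 1 := by
    intro n
    rcases Nat.eq_zero_or_pos n with h0 | h1
    · subst h0; simp [hc0]
    · obtain ⟨m, rfl⟩ : ∃ m, n = m + 1 := ⟨n - 1, by omega⟩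
      rw [abs_le]
      constructor
      · -- -1 ≤ c n : c n = -(sum) where sum ≤ a (m+1) ≤ 1
        have := hrec'' (m + 1) (by omega)
        rw [this, neg_le, neg_neg]
        rw [Finset.sum_range_succ]
        have hlast : a (m + 1) * c (m + 1 - 1 - m) = a (m + 1) := by
          have : m + 1 - 1 - m = 0 := by omega
          rw [this, hc0, mul_one]
        rw [hlast]
        have hrest : ∑ j ∈ Finset.range m, a (j + 1) * c (m + 1 - 1 - j) ≤ 0 := by
          refine Finset.sum_nonpos ?_
          intro j hj
          rw [Finset.mem_range] at hj
          have h1 : 1 ≤ m + 1 - 1 - j := by omega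
          exact mul_nonpos_of_nonneg_of_nonpos (le_of_lt (hapos _)) (hneg _ h1)
        have := hale1 (m + 1)
        linarith
      · have := hneg (m + 1) (by omega)
        linarith
  intro x hx0 hx1
  have hxne : x ≠ 0 := by
    intro h; rw [h, abs_zero] at hx0; exact lt_irrefl 0 hx0
  have hx2 : x ^ 2 < 1 := by
    have : |x| ^ 2 < 1 := by
      calc |x| ^ 2 ≤ |x| * 1 := by rw [pow_two]; exact mul_le_mul_of_nonneg_left (le_of_lt hx1) (abs_nonneg x)
      _ = |x| := mul_one _
      _ < 1 := hx1
    rwa [sq_abs] at this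
  have hx2nn : (0:ℝ) ≤ x ^ 2 := sq_nonneg x
  -- summability with norms
  have hgeo : Summable (fun ℓ : ℕ => (x ^ 2) ^ ℓ) :=
    summable_geometric_of_lt_one hx2nn hx2
  have hxpow : ∀ ℓ : ℕ, |x ^ (2 * ℓ)| = (x ^ 2) ^ ℓ := by
    intro ℓ
    rw [pow_mul, abs_pow, abs_of_nonneg hx2nn]
  have hSnorm : Summable (fun ℓ : ℕ => ‖c ℓ * x ^ (2 * ℓ)‖) := by
    refine Summable.of_nonneg_of_le (fun ℓ => norm_nonneg _) (fun ℓ => ?_) hgeo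
    rw [Real.norm_eq_abs, abs_mul, hxpow]
    calc |c ℓ| * (x ^ 2) ^ ℓ ≤ 1 * (x ^ 2) ^ ℓ :=
          mul_le_mul_of_nonneg_right (hbd ℓ) (by positivity)
      _ = (x ^ 2) ^ ℓ := one_mul _
  have hAnorm : Summable (fun ℓ : ℕ => ‖a ℓ * x ^ (2 * ℓ)‖) := by
    refine Summable.of_nonneg_of_le (fun ℓ => norm_nonneg _) (fun ℓ => ?_) hgeo
    rw [Real.norm_eq_abs, abs_mul, hxpow]
    calc |a ℓ| * (x ^ 2) ^ ℓ ≤ 1 * (x ^ 2) ^ ℓ := by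
          refine mul_le_mul_of_nonneg_right ?_ (by positivity)
          rw [abs_of_pos (hapos ℓ)]; exact hale1 ℓ
      _ = (x ^ 2) ^ ℓ := one_mul _
  have hS : Summable (fun ℓ : ℕ => c ℓ * x ^ (2 * ℓ)) := hSnorm.of_norm
  -- the logarithm series
  set L : ℝ := Real.log ((1 + x) / (1 - x)) with hL_def
  have hx1' : -1 < x := by
    have := abs_lt.mp hx1; exact this.1
  have hx1'' : x < 1 := (abs_lt.mp hx1).2
  have h1px : (0:ℝ) < 1 + x := by linarith
  have h1mx : (0:ℝ) < 1 - x := by linarith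
  have hLeq : L = Real.log (1 + x) - Real.log (1 - x) := by
    rw [hL_def, Real.log_div (ne_of_gt h1px) (ne_of_gt h1mx)]
  have hlog := Real.hasSum_log_sub_log_of_abs_lt_one hx1
  have hG : HasSum (fun ℓ : ℕ => a ℓ * x ^ (2 * ℓ)) (L / (2 * x)) := by
    have := hlog.div_const (2 * x)
    rw [← hLeq] at this
    have hf : (fun ℓ : ℕ => a ℓ * x ^ (2 * ℓ))
        = fun i : ℕ => 2 * (1 / (2 * (i:ℝ) + 1)) * x ^ (2 * i + 1) / (2 * x) := by
      funext ℓ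
      rw [ha_def]
      field_simp
      ring
    rw [hf]; exact this
  have hG1 : 1 ≤ L / (2 * x) := by
    have := le_hasSum hG 0 (fun i _ => mul_nonneg (hapos i).le (by rw [pow_mul]; positivity))
    simpa [ha0] using this
  have hGne : L / (2 * x) ≠ 0 := by linarith
  -- the Cauchy product
  have hP := hasSum_sum_range_mul_of_summable_norm hSnorm hAnorm
  have hGtsum : (∑' n, a n * x ^ (2 * n)) = L / (2 * x) := hG.tsum_eq
  rw [hGtsum] at hP
  -- identify the Cauchy product terms
  have hterm : ∀ n : ℕ, (∑ k ∈ Finset.range (n + 1),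
      (c k * x ^ (2 * k)) * (a (n - k) * x ^ (2 * (n - k))))
      = if n = 0 then (1:ℝ) else 0 := by
    intro n
    have hstep : ∀ k ∈ Finset.range (n + 1),
        (c k * x ^ (2 * k)) * (a (n - k) * x ^ (2 * (n - k)))
        = (c k * a (n - k)) * x ^ (2 * n) := by
      intro k hk
      rw [Finset.mem_range] at hk
      have : 2 * k + 2 * (n - k) = 2 * n := by omega
      rw [← this, pow_add]
      ring
    rw [Finset.sum_congr rfl hstep, ← Finset.sum_mul]
    rcases Nat.eq_zero_or_pos n with h0 | h1
    · subst h0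
      simp [hc0, ha0]
    · have : ∑ k ∈ Finset.range (n + 1), c k * a (n - k) = 0 := by
        rw [← hconv n h1]
        rw [← Finset.sum_range_reflect]
        refine Finset.sum_congr rfl ?_
        intro j hj
        rw [Finset.mem_range] at hj
        have h1' : n + 1 - 1 - j = n - j := by omega
        have h2' : n - (n - j) = j := by omega
        rw [h1', h2']
        ring
      rw [this, zero_mul, if_neg (by omega)]
  have hP1 : HasSum (fun n : ℕ => if n = 0 then (1:ℝ) else 0)
      ((∑' n, c n * x ^ (2 * n)) * (L / (2 * x))) := by
    rw [show (fun n : ℕ => if n = 0 then (1:ℝ) else 0) = _ from funext fun n => (hterm n).symm]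
    exact hP
  have hone : (∑' n, c n * x ^ (2 * n)) * (L / (2 * x)) = 1 :=
    (hP1.unique (hasSum_ite_eq 0 1))
  have hLne : L ≠ 0 := by
    intro h
    rw [h, zero_div] at hG1
    linarith
  have hSval : (∑' n, c n * x ^ (2 * n)) = 2 * x / L := by
    have h2x : (2:ℝ) * x ≠ 0 := mul_ne_zero two_ne_zero hxne
    rw [eq_div_iff hLne]
    rw [mul_div_assoc'] at hone
    rw [div_eq_iff h2x] at hone
    linarith
  have := hS.hasSum
  rwa [hSval] at this
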